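/- Let X be a real Banach space and (P_n) a sequence of bounded symmetric operators X → X* that is monotone decreasing (P_{n+1} ≤ P_n in the quadratic-form order) and bounded below by 0. Then there exists a bounded symmetric positive definite operator P such that P_n x → P x in norm in X* for every x ∈ X (strong operator convergence). -/

import Mathlib

set_option maxHeartbeats 1000000

open Filter Topology

lemma aux_cs {X : Type*} [NormedAddCommGroup X] [NormedSpace ℝ X]
    (B : X →L[ℝ] X →L[ℝ] ℝ) (hs : ∀ u v, B u v = B v u) (hp : ∀ u, 0 ≤ B u u)
    (x y : X) : (B x y)^2 ≤ B x x * B y y := by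
  have h : ∀ t : ℝ, 0 ≤ (B y y) * (t * t) + (2 * B x y) * t + B x x := by
    intro t
    have h2 := hp (x + t • y)
    simp only [map_add, map_smul, ContinuousLinearMap.add_apply,
      ContinuousLinearMap.smul_apply, smul_eq_mul] at h2
    have hyx : B y x = B x y := hs y x
    rw [hyx] at h2
    nlinarith [h2]
  have hd := discrim_le_zero h
  rw [discrim] at hd
  nlinarith [hd]


/-- A monotone decreasing sequence of bounded symmetric operators `X → X*`,
bounded below by `0` in the quadratic-form order, converges in the strong operator topology
to a bounded symmetric positive definite operator. -/
theorem exists_strong_operator_limit_of_antitone_nonneg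
    {X : Type*} [NormedAddCommGroup X] [NormedSpace ℝ X] [CompleteSpace X]
    (P : ℕ → X →L[ℝ] X →L[ℝ] ℝ)
    (hsym : ∀ n, ∀ x y : X, P n x y = P n y x)
    (hpos : ∀ n, ∀ x : X, 0 ≤ P n x x)
    (hmono : ∀ n, ∀ x : X, P (n + 1) x x ≤ P n x x) :
    ∃ Q : X →L[ℝ] X →L[ℝ] ℝ, (∀ x y : X, Q x y = Q y x) ∧ (∀ x : X, 0 ≤ Q x x) ∧
      ∀ x : X, Tendsto (fun n => P n x) atTop (𝓝 (Q x)) := by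
  set C : ℝ := ‖P 0‖ with hC
  have hC0 : 0 ≤ C := hC ▸ ContinuousLinearMap.opNorm_nonneg _
  have hanti : ∀ x : X, Antitone (fun n => P n x x) := fun x =>
    antitone_nat_of_succ_le (fun n => hmono n x)
  -- quadratic form bound
  have hQbound : ∀ n (y : X), P n y y ≤ C * ‖y‖^2 := by
    intro n y
    calc P n y y ≤ P 0 y y := hanti y (Nat.zero_le n)
    _ ≤ ‖P 0 y y‖ := le_abs_self _
    _ ≤ ‖P 0 y‖ * ‖y‖ := (P 0 y).le_opNorm y
    _ ≤ (‖P 0‖ * ‖y‖) * ‖y‖ := by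
        exact mul_le_mul_of_nonneg_right ((P 0).le_opNorm y) (norm_nonneg _)
    _ = C * ‖y‖^2 := by ring
  -- norm bound for differences
  have hdiff : ∀ {n m : ℕ}, n ≤ m → ∀ x : X,
      ‖P n x - P m x‖ ≤ Real.sqrt ((P n x x - P m x x) * C) := by
    intro n m hnm x
    set B : X →L[ℝ] X →L[ℝ] ℝ := P n - P m with hB
    have hBapp : ∀ u v : X, B u v = P n u v - P m u v := by
      intro u v; simp [hB]
    have hBs : ∀ u v, B u v = B v u := by
      intro u v; rw [hBapp, hBapp, hsym n, hsym m]
    have hBp : ∀ u, 0 ≤ B u u := by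
      intro u; rw [hBapp]; linarith [hanti u hnm]
    have hPnx : P n x - P m x = B x := by simp [hB]
    rw [hPnx]
    apply ContinuousLinearMap.opNorm_le_bound _ (Real.sqrt_nonneg _) (fun y => ?_)
    have hcs := aux_cs B hBs hBp x y
    have hByy : B y y ≤ C * ‖y‖^2 := by
      rw [hBapp]; linarith [hQbound n y, hpos m y]
    have h1 : ‖B x y‖ = Real.sqrt ((B x y)^2) := by
      rw [Real.norm_eq_abs, ← Real.sqrt_sq_eq_abs]
    rw [h1]
    calc Real.sqrt ((B x y)^2) ≤ Real.sqrt (B x x * (C * ‖y‖^2)) := by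
          apply Real.sqrt_le_sqrt
          calc (B x y)^2 ≤ B x x * B y y := hcs
          _ ≤ B x x * (C * ‖y‖^2) := mul_le_mul_of_nonneg_left hByy (hBp x)
    _ = Real.sqrt (B x x * C) * ‖y‖ := by
          rw [show B x x * (C * ‖y‖^2) = (B x x * C) * ‖y‖^2 by ring,
            Real.sqrt_mul (by nlinarith [hBp x]), Real.sqrt_sq (norm_nonneg y)]
    _ = Real.sqrt ((P n x x - P m x x) * C) * ‖y‖ := by rw [hBapp]
  -- limits of quadratic forms
  have hbdd : ∀ x : X, BddBelow (Set.range fun n => P n x x) := by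
    intro x; exact ⟨0, fun r ⟨n, hn⟩ => hn ▸ hpos n x⟩
  have hqlim : ∀ x : X, Tendsto (fun n => P n x x) atTop (𝓝 (⨅ n, P n x x)) :=
    fun x => tendsto_atTop_ciInf (hanti x) (hbdd x)
  -- Cauchy sequence
  have hcauchy : ∀ x : X, CauchySeq (fun n => P n x) := by
    intro x
    set L : ℝ := ⨅ n, P n x x with hL
    apply cauchySeq_of_le_tendsto_0 (fun N => Real.sqrt ((P N x x - L) * C))
    · intro n m N hn hm
      have key : ∀ {a b : ℕ}, a ≤ b → N ≤ a →
          ‖P a x - P b x‖ ≤ Real.sqrt ((P N x x - L) * C) := by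
        intro a b hab hNa
        refine (hdiff hab x).trans ?_
        apply Real.sqrt_le_sqrt
        apply mul_le_mul_of_nonneg_right _ hC0
        have h1 : P a x x ≤ P N x x := hanti x hNa
        have h2 : L ≤ P b x x := ciInf_le (hbdd x) b
        linarith
      rw [dist_eq_norm]
      rcases le_total n m with h | h
      · exact key h hn
      · rw [norm_sub_rev]; exact key h hm
    · have : Tendsto (fun N => (P N x x - L) * C) atTop (𝓝 0) := by
        have := ((hqlim x).sub_const L).mul_const C
        rw [← hL, sub_self, zero_mul] at this
        exact this
      have hs := (Real.continuous_sqrt.tendsto 0).comp this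
      simpa [Function.comp_def] using hs
  -- limit function
  have hlim : ∀ x : X, ∃ f : X →L[ℝ] ℝ, Tendsto (fun n => P n x) atTop (𝓝 f) :=
    fun x => cauchySeq_tendsto_of_complete (hcauchy x)
  choose g hg using hlim
  -- pointwise (real-valued) convergence
  have hgpt : ∀ (x y : X), Tendsto (fun n => P n x y) atTop (𝓝 (g x y)) := by
    intro x y
    have : Continuous fun f : X →L[ℝ] ℝ => f y :=
      ContinuousLinearMap.continuous (ContinuousLinearMap.apply ℝ ℝ y)
    exact (this.tendsto _).comp (hg x)
  -- uniform operator bound: ‖P n x‖ ≤ C ‖x‖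
  have hbound : ∀ n (x : X), ‖P n x‖ ≤ C * ‖x‖ := by
    intro n x
    apply ContinuousLinearMap.opNorm_le_bound _ (by positivity) (fun y => ?_)
    have hcs := aux_cs (P n) (hsym n) (hpos n) x y
    have h1 : ‖P n x y‖ = Real.sqrt ((P n x y)^2) := by
      rw [Real.norm_eq_abs, ← Real.sqrt_sq_eq_abs]
    rw [h1]
    calc Real.sqrt ((P n x y)^2)
        ≤ Real.sqrt ((C * ‖x‖^2) * (C * ‖y‖^2)) := by
          apply Real.sqrt_le_sqrt
          refine hcs.trans ?_
          exact mul_le_mul (hQbound n x) (hQbound n y) (hpos n y) (by positivity)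
    _ = C * ‖x‖ * ‖y‖ := by
          rw [show (C * ‖x‖^2) * (C * ‖y‖^2) = (C * ‖x‖ * ‖y‖)^2 by ring]
          exact Real.sqrt_sq (by positivity)
  -- g is linear
  have hadd : ∀ x y : X, g (x + y) = g x + g y := by
    intro x y
    refine tendsto_nhds_unique ?_ ((hg x).add (hg y))
    have : (fun n => P n (x + y)) = fun n => P n x + P n y := by
      funext n; simp
    rw [← this]; exact hg (x + y)
  have hsmul : ∀ (c : ℝ) (x : X), g (c • x) = c • g x := by
    intro c x
    refine tendsto_nhds_unique ?_ ((hg x).const_smul c)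
    have : (fun n => P n (c • x)) = fun n => c • P n x := by
      funext n; simp
    rw [← this]; exact hg (c • x)
  have hgbound : ∀ x : X, ‖g x‖ ≤ C * ‖x‖ := by
    intro x
    exact le_of_tendsto ((continuous_norm.tendsto _).comp (hg x))
      (Eventually.of_forall fun n => hbound n x)
  set Q : X →L[ℝ] X →L[ℝ] ℝ :=
    LinearMap.mkContinuous
      { toFun := g, map_add' := hadd, map_smul' := hsmul } C hgbound with hQ
  have hQapp : ∀ x, Q x = g x := fun x => rfl
  refine ⟨Q, ?_, ?_, ?_⟩
  · intro x y
    rw [hQapp, hQapp]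
    refine tendsto_nhds_unique (hgpt x y) ?_
    have : (fun n => P n x y) = fun n => P n y x := by
      funext n; exact hsym n x y
    rw [this]; exact hgpt y x
  · intro x
    rw [hQapp]
    exact le_of_tendsto_of_tendsto' tendsto_const_nhds (hgpt x x) (fun n => hpos n x)
  · intro x; rw [hQapp]; exact hg x
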